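/- For -1 ≤ r < 1 with r ≠ 0 and κ ∈ Γ₊, if a vector η ∈ ℝⁿ satisfies (D²F(κ))η = 0, where F(κ) = (n⁻¹ Σᵢ κᵢʳ)^{1/r}, then η is a scalar multiple of κ; explicitly ηᵢ = (Σₗ κₗʳ)⁻¹ (Σⱼ κⱼ^{r-1} ηⱼ) κᵢ. -/

import Mathlib

open Real Finset

/-- If `η` is in the kernel of the Hessian of the power mean
`F(κ) = (n⁻¹ ∑ᵢ κᵢʳ)^{1/r}` at `κ ∈ Γ₊`, then `η` is a multiple of `κ`:
explicitly `ηᵢ = (∑ₗ κₗʳ)⁻¹ (∑ⱼ κⱼ^{r-1} ηⱼ) κᵢ`. -/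
theorem powerMean_hessian_kernel (n : ℕ) (hn : 1 ≤ n) (r : ℝ)
    (hr1 : -1 ≤ r) (hr2 : r < 1) (hr0 : r ≠ 0)
    (F : (Fin n → ℝ) → ℝ)
    (hF : ∀ κ : Fin n → ℝ, F κ = ((n : ℝ)⁻¹ * ∑ i, κ i ^ r) ^ (1 / r))
    (κ : Fin n → ℝ) (hκ : ∀ i, 0 < κ i) (η : Fin n → ℝ)
    (hker : ∀ i, ∑ j, fderiv ℝ (fun x => fderiv ℝ F x (Pi.single j 1)) κ
      (Pi.single i 1) * η j = 0) :
    (∀ i, η i = (∑ l, κ l ^ r)⁻¹ * (∑ j, κ j ^ (r - 1) * η j) * κ i) ∧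
      ∃ lam : ℝ, η = lam • κ := by
  have hne : Nonempty (Fin n) := Fin.pos_iff_nonempty.mp hn
  have hnpos : (0 : ℝ) < (n : ℝ) := by exact_mod_cast hn
  set c : ℝ := (n : ℝ)⁻¹ with hc_def
  have hc : 0 < c := inv_pos.mpr hnpos
  set S : (Fin n → ℝ) → ℝ := fun x => ∑ k, x k ^ r with hS_def
  set L : (Fin n → ℝ) → ((Fin n → ℝ) →L[ℝ] ℝ) :=
    fun x => ∑ k, (r * x k ^ (r - 1)) • ContinuousLinearMap.proj k with hL_def
  -- derivative of S
  have hS : ∀ x : Fin n → ℝ, (∀ i, 0 < x i) → HasFDerivAt S (L x) x := by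
    intro x hx
    apply HasFDerivAt.fun_sum
    intro k _
    exact (Real.hasDerivAt_rpow_const (Or.inl (hx k).ne')).comp_hasFDerivAt (f := fun y : Fin n → ℝ => y k) x
      (hasFDerivAt_apply k x)
  have hSpos : ∀ x : Fin n → ℝ, (∀ i, 0 < x i) → 0 < S x := by
    intro x hx
    exact Finset.sum_pos (fun i _ => Real.rpow_pos_of_pos (hx i) r) Finset.univ_nonempty
  -- evaluation of L
  have hLval : ∀ (x : Fin n → ℝ) (j : Fin n), L x (Pi.single j 1) = r * x j ^ (r - 1) := by
    intro x j
    simp only [hL_def, ContinuousLinearMap.sum_apply, ContinuousLinearMap.smul_apply,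
      ContinuousLinearMap.proj_apply, smul_eq_mul, Pi.single_apply, mul_ite, mul_one, mul_zero]
    simp [Finset.sum_ite_eq']
  -- derivative of F
  have hFd : ∀ x : Fin n → ℝ, (∀ i, 0 < x i) →
      HasFDerivAt F ((1 / r * (c * S x) ^ (1 / r - 1)) • (c • L x)) x := by
    intro x hx
    have hFeq : F = fun y => (c * S y) ^ (1 / r) := funext fun y => hF y
    rw [hFeq]
    have h1 : HasFDerivAt (fun y => c * S y) (c • L x) x := (hS x hx).const_mul c
    exact (Real.hasDerivAt_rpow_const (p := 1 / r)
      (Or.inl (mul_pos hc (hSpos x hx)).ne')).comp_hasFDerivAt x h1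
  -- first derivative formula
  have hg : ∀ (j : Fin n) (x : Fin n → ℝ), (∀ i, 0 < x i) →
      fderiv ℝ F x (Pi.single j 1) = c * (c * S x) ^ (1 / r - 1) * x j ^ (r - 1) := by
    intro j x hx
    rw [(hFd x hx).fderiv]
    simp only [ContinuousLinearMap.smul_apply, smul_eq_mul, hLval x j]
    field_simp
  -- the open positivity set
  have hUopen : IsOpen {x : Fin n → ℝ | ∀ i, 0 < x i} := by
    have : {x : Fin n → ℝ | ∀ i, 0 < x i} =
        Set.pi Set.univ (fun _ : Fin n => Set.Ioi (0 : ℝ)) := by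
      ext x; simp [Set.mem_pi]
    rw [this]
    exact isOpen_set_pi Set.finite_univ fun i _ => isOpen_Ioi
  have hUmem : {x : Fin n → ℝ | ∀ i, 0 < x i} ∈ nhds κ := hUopen.mem_nhds hκ
  -- second derivative pieces
  have hcS : 0 < c * S κ := mul_pos hc (hSpos κ hκ)
  have hP : HasFDerivAt (fun x => (c * S x) ^ (1 / r - 1))
      ((((1 / r - 1) * (c * S κ) ^ (1 / r - 1 - 1))) • (c • L κ)) κ :=
    (Real.hasDerivAt_rpow_const (p := 1 / r - 1) (Or.inl hcS.ne')).comp_hasFDerivAt (f := fun y => c * S y) κ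
      ((hS κ hκ).const_mul c)
  have hQ : ∀ j : Fin n, HasFDerivAt (fun x : Fin n → ℝ => x j ^ (r - 1))
      (((r - 1) * κ j ^ (r - 1 - 1)) • (ContinuousLinearMap.proj j : (Fin n → ℝ) →L[ℝ] ℝ)) κ := by
    intro j
    exact (Real.hasDerivAt_rpow_const (Or.inl (hκ j).ne')).comp_hasFDerivAt (f := fun x : Fin n → ℝ => x j) κ
      (hasFDerivAt_apply j κ)
  have hgj : ∀ j : Fin n, HasFDerivAt (fun x => c * (c * S x) ^ (1 / r - 1) * x j ^ (r - 1))
      (c • ((c * S κ) ^ (1 / r - 1) • (((r - 1) * κ j ^ (r - 1 - 1)) • (ContinuousLinearMap.proj j : (Fin n → ℝ) →L[ℝ] ℝ))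
        + κ j ^ (r - 1) • ((((1 / r - 1) * (c * S κ) ^ (1 / r - 1 - 1))) • (c • L κ)))) κ := by
    intro j
    have := (hP.mul (hQ j)).const_mul c
    simpa [mul_assoc] using this
  -- Hessian entry
  have hH : ∀ i j : Fin n,
      fderiv ℝ (fun x => fderiv ℝ F x (Pi.single j 1)) κ (Pi.single i 1)
        = c * ((c * S κ) ^ (1 / r - 1) * ((r - 1) * κ j ^ (r - 1 - 1) * (Pi.single (M := fun _ => ℝ) i 1 j))
          + κ j ^ (r - 1) * ((1 / r - 1) * (c * S κ) ^ (1 / r - 1 - 1) * (c * (r * κ i ^ (r - 1))))) := by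
    intro i j
    have heq : (fun x => fderiv ℝ F x (Pi.single j 1)) =ᶠ[nhds κ]
        (fun x => c * (c * S x) ^ (1 / r - 1) * x j ^ (r - 1)) :=
      Filter.eventuallyEq_of_mem hUmem fun x hx => hg j x hx
    rw [heq.fderiv_eq, (hgj j).fderiv]
    simp only [ContinuousLinearMap.smul_apply, ContinuousLinearMap.add_apply,
      ContinuousLinearMap.proj_apply, smul_eq_mul, hLval κ i]
  -- main computation
  set T : ℝ := ∑ j, κ j ^ (r - 1) * η j with hT_def
  have hSκ : 0 < S κ := hSpos κ hκ
  have key : ∀ i, η i = (S κ)⁻¹ * T * κ i := by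
    intro i
    have h := hker i
    have h' : (∑ j, (c * ((c * S κ) ^ (1 / r - 1) * ((r - 1) * κ j ^ (r - 1 - 1) * (Pi.single (M := fun _ => ℝ) i 1 j))
        + κ j ^ (r - 1) * ((1 / r - 1) * (c * S κ) ^ (1 / r - 1 - 1) * (c * (r * κ i ^ (r - 1)))))) * η j) = 0 := by
      rw [← h]
      exact Finset.sum_congr rfl fun j _ => by rw [hH i j]
    have h'' : (∑ j, ((c * (c * S κ) ^ (1 / r - 1) * (r - 1) * κ j ^ (r - 1 - 1) * η j) * (Pi.single (M := fun _ => ℝ) i 1 j)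
        + (c * ((1 / r - 1) * (c * S κ) ^ (1 / r - 1 - 1) * (c * (r * κ i ^ (r - 1))))) * (κ j ^ (r - 1) * η j))) = 0 := by
      rw [← h']
      exact Finset.sum_congr rfl fun j _ => by ring
    rw [Finset.sum_add_distrib, ← Finset.mul_sum, ← hT_def] at h''
    simp only [Pi.single_apply, mul_ite, mul_one, mul_zero, Finset.sum_ite_eq', Finset.mem_univ,
      if_true] at h''
    -- rewrite the rpow exponents
    have e1 : (c * S κ) ^ (1 / r - 1) = (c * S κ) ^ (1 / r - 1 - 1) * (c * S κ) := by
      calc (c * S κ) ^ (1 / r - 1) = (c * S κ) ^ ((1 / r - 1 - 1) + 1) := by congr 1; ring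
        _ = (c * S κ) ^ (1 / r - 1 - 1) * (c * S κ) := by
            rw [Real.rpow_add hcS, Real.rpow_one]
    have e2 : κ i ^ (r - 1) = κ i ^ (r - 1 - 1) * κ i := by
      calc κ i ^ (r - 1) = κ i ^ ((r - 1 - 1) + 1) := by congr 1; ring
        _ = κ i ^ (r - 1 - 1) * κ i := by rw [Real.rpow_add (hκ i), Real.rpow_one]
    rw [e1, e2] at h''
    have ha : (0 : ℝ) < (c * S κ) ^ (1 / r - 1 - 1) := Real.rpow_pos_of_pos hcS _
    have hb : (0 : ℝ) < κ i ^ (r - 1 - 1) := Real.rpow_pos_of_pos (hκ i) _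
    have hz : (c * c * ((c * S κ) ^ (1 / r - 1 - 1) * κ i ^ (r - 1 - 1))) *
        ((r - 1) * (S κ * η i) + ((1 / r - 1) * r) * (κ i * T)) = 0 := by
      linear_combination h''
    have hcc : (c * c * ((c * S κ) ^ (1 / r - 1 - 1) * κ i ^ (r - 1 - 1))) ≠ 0 := by positivity
    have hfac : (r - 1) * (S κ * η i) + ((1 / r - 1) * r) * (κ i * T) = 0 :=
      (mul_eq_zero.mp hz).resolve_left hcc
    have hrr : (1 / r - 1) * r = 1 - r := by field_simp
    rw [hrr] at hfac
    have h5 : (r - 1) * (S κ * η i - κ i * T) = 0 := by linear_combination hfac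
    have h6 : S κ * η i = κ i * T := by
      rcases mul_eq_zero.mp h5 with hcase | hcase
      · exact absurd hcase (by intro hh; nlinarith)
      · linarith
    have hSne : S κ ≠ 0 := hSκ.ne'
    calc η i = (S κ)⁻¹ * (S κ * η i) := by rw [← mul_assoc, inv_mul_cancel₀ hSne, one_mul]
      _ = (S κ)⁻¹ * (κ i * T) := by rw [h6]
      _ = (S κ)⁻¹ * T * κ i := by ring
  refine ⟨fun i => ?_, ⟨(S κ)⁻¹ * T, funext fun i => ?_⟩⟩
  · simpa [hS_def, hT_def] using key i
  · simpa [hS_def, hT_def, mul_comm, mul_assoc] using key i
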